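/- Every cyclic quadrilateral with integer side lengths whose area equals its perimeter has, as its multiset of side lengths, one of exactly four possibilities: {14,6,5,5}, {8,5,5,2}, {6,6,3,3}, {4,4,4,4}. -/

import Mathlib

noncomputable section

/-- Euclidean distance between two points of `ℝ × ℝ`. -/
def dist2 (p q : ℝ × ℝ) : ℝ := Real.sqrt ((p.1 - q.1) ^ 2 + (p.2 - q.2) ^ 2)

/-- Signed cross product of the vectors `q - p` and `r - p`. -/
def cross (p q r : ℝ × ℝ) : ℝ :=
  (q.1 - p.1) * (r.2 - p.2) - (q.2 - p.2) * (r.1 - p.1)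

/-- Three points are collinear. -/
def Collinear3 (p q r : ℝ × ℝ) : Prop := cross p q r = 0

/-- Dot product on `ℝ × ℝ`. -/
def dot2 (p q : ℝ × ℝ) : ℝ := p.1 * q.1 + p.2 * q.2

/-- Closed segment between two points. -/
def Seg (p q : ℝ × ℝ) : Set (ℝ × ℝ) :=
  {x | ∃ t : ℝ, 0 ≤ t ∧ t ≤ 1 ∧ x = (1 - t) • p + t • q}

/-- Twice the signed (shoelace) area of the quadrilateral `O A B C`. -/
def shoelace (O A B C : ℝ × ℝ) : ℝ :=
  (O.1 * A.2 - A.1 * O.2) + (A.1 * B.2 - B.1 * A.2) +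
    (B.1 * C.2 - C.1 * B.2) + (C.1 * O.2 - O.1 * C.2)

/-- Area of the (simple) quadrilateral `O A B C`, by the shoelace formula. -/
def quadArea (O A B C : ℝ × ℝ) : ℝ := |shoelace O A B C| / 2

/-- Perimeter of the quadrilateral `O A B C`. -/
def quadPerim (O A B C : ℝ × ℝ) : ℝ :=
  dist2 O A + dist2 A B + dist2 B C + dist2 C O

/-- Simple quadrilateral: no three vertices collinear, and the four closed sides
intersect only at shared endpoints. -/
def IsSimpleQuad (O A B C : ℝ × ℝ) : Prop :=
  ¬ Collinear3 O A B ∧ ¬ Collinear3 A B C ∧ ¬ Collinear3 B C O ∧ ¬ Collinear3 C O A ∧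
  Seg O A ∩ Seg B C = ∅ ∧ Seg A B ∩ Seg C O = ∅ ∧
  Seg O A ∩ Seg A B = {A} ∧ Seg A B ∩ Seg B C = {B} ∧
  Seg B C ∩ Seg C O = {C} ∧ Seg C O ∩ Seg O A = {O}

/-- Quadrilateral `O A B C`: simple, with vertices in counterclockwise order. -/
def IsQuad (O A B C : ℝ × ℝ) : Prop :=
  IsSimpleQuad O A B C ∧ 0 < shoelace O A B C

/-- A point of `ℝ × ℝ` with integer coordinates. -/
def IsLatticePt (p : ℝ × ℝ) : Prop := ∃ m n : ℤ, p = ((m : ℝ), (n : ℝ))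

/-- An isometry of the Euclidean plane `ℝ × ℝ`. -/
def IsIsometry2 (f : ℝ × ℝ → ℝ × ℝ) : Prop :=
  Function.Bijective f ∧ ∀ p q, dist2 (f p) (f q) = dist2 p q

/-- The four vertices are in convex position: no vertex lies in the convex hull
of the other three. -/
def ConvexPos (O A B C : ℝ × ℝ) : Prop :=
  O ∉ convexHull ℝ ({A, B, C} : Set (ℝ × ℝ)) ∧
  A ∉ convexHull ℝ ({O, B, C} : Set (ℝ × ℝ)) ∧
  B ∉ convexHull ℝ ({O, A, C} : Set (ℝ × ℝ)) ∧
  C ∉ convexHull ℝ ({O, A, B} : Set (ℝ × ℝ))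

/-- The segment `pq` is parallel to the segment `rs`. -/
def Para (p q r s : ℝ × ℝ) : Prop :=
  (q.1 - p.1) * (s.2 - r.2) - (q.2 - p.2) * (s.1 - r.1) = 0

/-- Area of the triangle `p q r`. -/
def triArea (p q r : ℝ × ℝ) : ℝ := |cross p q r| / 2

/-- Heron's formula: area of a triangle with side lengths `p`, `q`, `r`. -/
def heronArea (p q r : ℝ) : ℝ :=
  Real.sqrt ((p + q + r) * (-p + q + r) * (p - q + r) * (p + q - r)) / 4

end

-- ===== auxiliary lemmas =====

private lemma ratio_aux {x y : ℝ} (hx : 0 < x) (hy : y < 0) :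
    0 ≤ x / (x - y) ∧ x / (x - y) ≤ 1 := by
  constructor
  · exact div_nonneg hx.le (by linarith)
  · rw [div_le_one (by linarith)]; linarith

private lemma ratio_mem {c1 c2 : ℝ} (h : c1 * c2 < 0) :
    0 ≤ c1 / (c1 - c2) ∧ c1 / (c1 - c2) ≤ 1 := by
  rcases mul_neg_iff.1 h with ⟨ha, hb⟩ | ⟨ha, hb⟩
  · exact ratio_aux ha hb
  · have h1 : c1 / (c1 - c2) = (-c1) / ((-c1) - (-c2)) := by
      rw [show (-c1) - (-c2) = -(c1 - c2) by ring, neg_div_neg_eq]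
    rw [h1]; exact ratio_aux (by linarith) (by linarith)

private lemma straddle {p q u v : ℝ × ℝ}
    (h1 : cross p q u * cross p q v < 0)
    (h2 : cross u v p * cross u v q < 0) :
    (Seg p q ∩ Seg u v).Nonempty := by
  have hne : cross u v p - cross u v q ≠ 0 := by
    rcases mul_neg_iff.1 h2 with ⟨ha, hb⟩ | ⟨ha, hb⟩ <;> intro h <;> linarith
  obtain ⟨t, ht⟩ : ∃ t : ℝ, t = cross u v p / (cross u v p - cross u v q) := ⟨_, rfl⟩
  have ht01 : 0 ≤ t ∧ t ≤ 1 := ht ▸ ratio_mem h2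
  obtain ⟨x1, hx1⟩ : ∃ x1 : ℝ, x1 = (1-t)*p.1 + t*q.1 := ⟨_, rfl⟩
  obtain ⟨x2, hx2⟩ : ∃ x2 : ℝ, x2 = (1-t)*p.2 + t*q.2 := ⟨_, rfl⟩
  have hXrep : ((x1, x2) : ℝ × ℝ) = (1 - t) • p + t • q := by
    refine Prod.ext ?_ ?_ <;> simp [hx1, hx2]
  have hX0 : (v.1-u.1)*(x2-u.2) - (v.2-u.2)*(x1-u.1) = 0 := by
    have hlin : (v.1-u.1)*(x2-u.2) - (v.2-u.2)*(x1-u.1)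
        = (1-t)*cross u v p + t*cross u v q := by
      rw [hx1, hx2]; simp only [cross]; ring
    rw [hlin, ht]; field_simp; ring
  have huv : 0 < (v.1-u.1)^2 + (v.2-u.2)^2 := by
    by_contra hle; push_neg at hle
    have e1 : v.1 - u.1 = 0 := by nlinarith [sq_nonneg (v.1-u.1), sq_nonneg (v.2-u.2)]
    have e2 : v.2 - u.2 = 0 := by nlinarith [sq_nonneg (v.1-u.1), sq_nonneg (v.2-u.2)]
    have h0 : cross u v p = 0 := by simp only [cross]; rw [e1, e2]; ring
    rw [h0] at h2; simp at h2
  obtain ⟨s, hs⟩ : ∃ s : ℝ,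
      s = ((x1-u.1)*(v.1-u.1) + (x2-u.2)*(v.2-u.2)) / ((v.1-u.1)^2 + (v.2-u.2)^2) := ⟨_, rfl⟩
  have c1 : s * (v.1-u.1) = x1 - u.1 := by
    rw [hs, div_mul_eq_mul_div, div_eq_iff (ne_of_gt huv)]
    linear_combination (v.2-u.2) * hX0
  have c2 : s * (v.2-u.2) = x2 - u.2 := by
    rw [hs, div_mul_eq_mul_div, div_eq_iff (ne_of_gt huv)]
    linear_combination (-(v.1-u.1)) * hX0
  have hXuv : ((x1, x2) : ℝ × ℝ) = (1 - s) • u + s • v := by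
    refine Prod.ext ?_ ?_ <;> simp <;> linarith [c1, c2]
  have hpq0 : (q.1-p.1)*(x2-p.2) - (q.2-p.2)*(x1-p.1) = 0 := by
    rw [hx1, hx2]; ring
  have hsval : (1-s) * cross p q u + s * cross p q v = 0 := by
    simp only [cross]
    linear_combination hpq0 + (q.1-p.1)*c2 - (q.2-p.2)*c1
  have hs01 : 0 ≤ s ∧ s ≤ 1 := by
    rcases mul_neg_iff.1 h1 with ⟨ha, hb⟩ | ⟨ha, hb⟩ <;> constructor <;> nlinarith
  exact ⟨(x1, x2), ⟨t, ht01.1, ht01.2, hXrep⟩, ⟨s, hs01.1, hs01.2, hXuv⟩⟩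

private lemma cyclic_key {P O A B C : ℝ × ℝ} {r : ℝ}
    (hO : (P.1 - O.1)^2 + (P.2 - O.2)^2 = r^2)
    (hA : (P.1 - A.1)^2 + (P.2 - A.2)^2 = r^2)
    (hB : (P.1 - B.1)^2 + (P.2 - B.2)^2 = r^2)
    (hC : (P.1 - C.1)^2 + (P.2 - C.2)^2 = r^2) :
    ((O.1-A.1)*(B.1-A.1) + (O.2-A.2)*(B.2-A.2)) * cross O B C
      + ((O.1-C.1)*(B.1-C.1) + (O.2-C.2)*(B.2-C.2)) * cross O A B = 0 := by
  simp only [cross]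
  linear_combination (((B.1-O.1)*(C.2-O.2) - (B.2-O.2)*(C.1-O.1))) * hA
    + (((A.1-O.1)*(B.2-O.2) - (A.2-O.2)*(B.1-O.1))) * hC
    + ((((B.1-O.1)*(A.2-O.2) - (B.2-O.2)*(A.1-O.1))
        - ((B.1-O.1)*(C.2-O.2) - (B.2-O.2)*(C.1-O.1))
        + ((A.1-O.1)*(C.2-O.2) - (A.2-O.2)*(C.1-O.1)))) * hO
    - (((A.1-O.1)*(C.2-O.2) - (A.2-O.2)*(C.1-O.1))) * hB

private lemma circle_bary {P W X Y Z : ℝ × ℝ} {r k1 k2 k3 : ℝ}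
    (hW : (P.1 - W.1)^2 + (P.2 - W.2)^2 = r^2)
    (hX : (P.1 - X.1)^2 + (P.2 - X.2)^2 = r^2)
    (hY : (P.1 - Y.1)^2 + (P.2 - Y.2)^2 = r^2)
    (hZ : (P.1 - Z.1)^2 + (P.2 - Z.2)^2 = r^2)
    (hb1 : (k1+k2+k3) * W.1 = k1*X.1 + k2*Y.1 + k3*Z.1)
    (hb2 : (k1+k2+k3) * W.2 = k1*X.2 + k2*Y.2 + k3*Z.2) :
    k1*k2*((X.1-Y.1)^2+(X.2-Y.2)^2) + k1*k3*((X.1-Z.1)^2+(X.2-Z.2)^2)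
      + k2*k3*((Y.1-Z.1)^2+(Y.2-Z.2)^2) = 0 := by
  linear_combination ((k1+k2+k3)*k1) * hX + ((k1+k2+k3)*k2) * hY + ((k1+k2+k3)*k3) * hZ
    - (k1+k2+k3)^2 * hW
    + (2*(k1+k2+k3)*(W.1-P.1) - ((k1+k2+k3)*W.1 - (k1*X.1 + k2*Y.1 + k3*Z.1))) * hb1
    + (2*(k1+k2+k3)*(W.2-P.2) - ((k1+k2+k3)*W.2 - (k1*X.2 + k2*Y.2 + k3*Z.2))) * hb2

set_option maxHeartbeats 4000000 in
private lemma dio (k1 k2 k3 k4 : ℤ) (h1 : 1 ≤ k1) (h12 : k1 ≤ k2) (h23 : k2 ≤ k3)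
    (h34 : k3 ≤ k4) (h4 : k4 ≤ k1 + k2 + k3 - 2)
    (heq : k1*k2*k3*k4 = (k1+k2+k3+k4)*(k1+k2+k3+k4)) :
    (k1 = 1 ∧ k2 = 9 ∧ k3 = 10 ∧ k4 = 10) ∨ (k1 = 2 ∧ k2 = 5 ∧ k3 = 5 ∧ k4 = 8)
      ∨ (k1 = 3 ∧ k2 = 3 ∧ k3 = 6 ∧ k4 = 6) ∨ (k1 = 4 ∧ k2 = 4 ∧ k3 = 4 ∧ k4 = 4) := by
  have hk2 : (1:ℤ) ≤ k2 := le_trans h1 h12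
  have hk3 : (1:ℤ) ≤ k3 := le_trans hk2 h23
  have hk4 : (1:ℤ) ≤ k4 := le_trans hk3 h34
  -- 5 ≤ k1*k2
  have h5 : 5 ≤ k1*k2 := by
    nlinarith [sq_nonneg (k3-k4), sq_nonneg (k1+k2-2),
      mul_nonneg (by linarith : (0:ℤ) ≤ k3) (by linarith : (0:ℤ) ≤ k4),
      mul_nonneg (by linarith : (0:ℤ) ≤ k1+k2-2) (by linarith : (0:ℤ) ≤ k3+k4)]
  -- k1*k2 ≤ 35
  have h36 : k1*k2 ≤ 35 := by
    by_contra hcon; push_neg at hcon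
    nlinarith [mul_nonneg (mul_nonneg (by linarith : (0:ℤ) ≤ k1*k2 - 36) (by linarith : (0:ℤ) ≤ k3)) (by linarith : (0:ℤ) ≤ k4),
      mul_nonneg (by linarith : (0:ℤ) ≤ 3*k3 - (k1+k2+k3)) (by linarith : (0:ℤ) ≤ k4),
      mul_nonneg (by linarith : (0:ℤ) ≤ 3*k4 - (k1+k2+k3)) (by linarith : (0:ℤ) ≤ (k1+k2+k3) - 2 - k4)]
  have hk1ub : k1 ≤ 5 := by nlinarith
  have hk2ub : k2 ≤ 35 := by nlinarith
  -- quadratic bound via Vieta-style partner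
  have hD : k4 * (k1*k2*k3 - 2*(k1+k2+k3) - k4) = (k1+k2+k3)^2 := by linear_combination heq
  have hD0 : 0 < k1*k2*k3 - 2*(k1+k2+k3) - k4 := by
    rcases lt_or_ge 0 (k1*k2*k3 - 2*(k1+k2+k3) - k4) with h | h
    · exact h
    · exfalso
      nlinarith [mul_nonneg (by linarith : (0:ℤ) ≤ k4) (by linarith : (0:ℤ) ≤ -(k1*k2*k3 - 2*(k1+k2+k3) - k4)),
        sq_nonneg (k1+k2+k3)]
  have hDs : k1+k2+k3 ≤ k1*k2*k3 - 2*(k1+k2+k3) - k4 := by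
    by_contra hcon; push_neg at hcon
    nlinarith [mul_nonneg (by linarith : (0:ℤ) ≤ (k1+k2+k3) - 2 - k4)
      (by linarith : (0:ℤ) ≤ (k1+k2+k3) - 1 - (k1*k2*k3 - 2*(k1+k2+k3) - k4))]
  have hq : k1*k2*(k3*k3) ≤ (k1+k2+k3)^2 + 2*(k1+k2+k3)*k3 + k3*k3 := by
    nlinarith [mul_nonneg (by linarith : (0:ℤ) ≤ k4 - k3)
      (by linarith : (0:ℤ) ≤ (k1*k2*k3 - 2*(k1+k2+k3) - k4) - k3), hD]
  clear hD hD0 hDs h36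
  interval_cases k1 <;> interval_cases k2 <;>
    first
      | (clear heq hq; omega)
      | (have h25 : k3 ≤ 25 := by nlinarith [hq, sq_nonneg k3];
         interval_cases k3 <;>
           first
             | (clear heq; omega)
             | (interval_cases k4 <;> omega))

set_option maxHeartbeats 2000000 in
private lemma intMain (a b c d : ℤ) (ha : 1 ≤ a) (hb : 1 ≤ b) (hc : 1 ≤ c) (hd : 1 ≤ d)
    (heq : (-a+b+c+d)*(a-b+c+d)*(a+b-c+d)*(a+b+c-d) = 16*(a+b+c+d)^2) :
    ({a,b,c,d} : Multiset ℤ) = {14,6,5,5} ∨ ({a,b,c,d} : Multiset ℤ) = {8,5,5,2}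
      ∨ ({a,b,c,d} : Multiset ℤ) = {6,6,3,3} ∨ ({a,b,c,d} : Multiset ℤ) = {4,4,4,4} := by
  classical
  obtain ⟨l, hsort, hcoe⟩ : ∃ l : List ℤ, List.Pairwise (· ≤ ·) l ∧ (l : Multiset ℤ) = {a,b,c,d} :=
    ⟨Multiset.sort {a,b,c,d} (· ≤ ·), Multiset.pairwise_sort _ _, Multiset.sort_eq _ _⟩
  have hlen : l.length = 4 := by
    have h4 : Multiset.card ({a,b,c,d} : Multiset ℤ) = 4 := rfl
    rw [← hcoe] at h4; simpa using h4
  obtain ⟨w, x, y, z, hl⟩ : ∃ w x y z : ℤ, l = [w, x, y, z] := by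
    match l, hlen with
    | [w, x, y, z], _ => exact ⟨w, x, y, z, rfl⟩
  subst hl
  have hM : ({a,b,c,d} : Multiset ℤ) = {w,x,y,z} := by
    rw [← hcoe]; rfl
  obtain ⟨hwx, hxy, hyz⟩ : w ≤ x ∧ x ≤ y ∧ y ≤ z := by
    simp [List.pairwise_cons] at hsort
    omega
  have hmem : ∀ t : ℤ, t ∈ ({w,x,y,z} : Multiset ℤ) → 1 ≤ t := by
    intro t ht
    rw [← hM] at ht
    simp [Multiset.mem_cons, Multiset.mem_singleton] at ht
    rcases ht with rfl | rfl | rfl | rfl <;> assumption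
  have hw1 : 1 ≤ w := hmem w (by simp)
  have hx1 : 1 ≤ x := hmem x (by simp)
  have hy1 : 1 ≤ y := hmem y (by simp)
  have hz1 : 1 ≤ z := hmem z (by simp)
  -- power sums
  have hp1 : a + b + c + d = w + x + y + z := by
    have := congrArg Multiset.sum hM
    simp at this; linarith [this]
  have hp2 : a^2 + b^2 + c^2 + d^2 = w^2 + x^2 + y^2 + z^2 := by
    have := congrArg (fun s : Multiset ℤ => ((s.map (fun t => t^2)).sum)) hM
    simp at this; linarith [this]
  have hp3 : a^3 + b^3 + c^3 + d^3 = w^3 + x^3 + y^3 + z^3 := by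
    have := congrArg (fun s : Multiset ℤ => ((s.map (fun t => t^3)).sum)) hM
    simp at this; linarith [this]
  have hp4 : a*b*c*d = w*x*y*z := by
    have := congrArg Multiset.prod hM
    simp at this; linarith [this]
  -- transfer the equation to (w,x,y,z) via symmetric functions
  have h3G : 3*((-w+x+y+z)*(w-x+y+z)*(w+x-y+z)*(w+x+y-z))
      = 3*((-a+b+c+d)*(a-b+c+d)*(a+b-c+d)*(a+b+c-d)) := by
    linear_combination
      (-((w+x+y+z)^3 + (w+x+y+z)^2*(a+b+c+d) + (w+x+y+z)*(a+b+c+d)^2 + (a+b+c+d)^3)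
        + 6*(a^2+b^2+c^2+d^2)*((w+x+y+z)+(a+b+c+d)) - 8*(a^3+b^3+c^3+d^3)) * hp1.symm
      + (6*(w+x+y+z)^2) * hp2.symm + (-8*(w+x+y+z)) * hp3.symm + (48:ℤ) * hp4.symm
  have hGw : (-w+x+y+z)*(w-x+y+z)*(w+x-y+z)*(w+x+y-z) = 16*(w+x+y+z)^2 := by
    have h16 : 3*((-w+x+y+z)*(w-x+y+z)*(w+x-y+z)*(w+x+y-z)) = 3*(16*(w+x+y+z)^2) := by
      rw [h3G, heq, hp1]
    linarith
  -- parity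
  obtain ⟨s, hs⟩ : ∃ s : ℤ, w + x + y + z = 2*s := by
    rcases Int.even_or_odd (w+x+y+z) with ⟨s, h⟩ | ⟨s, h⟩
    · exact ⟨s, by omega⟩
    · exfalso
      have ho : Odd ((-w+x+y+z)*(w-x+y+z)*(w+x-y+z)*(w+x+y-z)) := by
        refine Odd.mul (Odd.mul (Odd.mul ?_ ?_) ?_) ?_
        · exact ⟨s - w, by omega⟩
        · exact ⟨s - x, by omega⟩
        · exact ⟨s - y, by omega⟩
        · exact ⟨s - z, by omega⟩
      rw [hGw] at ho
      obtain ⟨t, ht⟩ := ho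
      have he : Even (16*(w+x+y+z)^2) := ⟨8*(w+x+y+z)^2, by ring⟩
      obtain ⟨u, hu⟩ := he
      omega
  obtain ⟨k1, hk1⟩ : ∃ k : ℤ, k = s - z := ⟨_, rfl⟩
  obtain ⟨k2, hk2⟩ : ∃ k : ℤ, k = s - y := ⟨_, rfl⟩
  obtain ⟨k3, hk3⟩ : ∃ k : ℤ, k = s - x := ⟨_, rfl⟩
  obtain ⟨k4, hk4⟩ : ∃ k : ℤ, k = s - w := ⟨_, rfl⟩
  have e1 : -w+x+y+z = 2*k4 := by omega
  have e2 : w-x+y+z = 2*k3 := by omega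
  have e3 : w+x-y+z = 2*k2 := by omega
  have e4 : w+x+y-z = 2*k1 := by omega
  rw [e1, e2, e3, e4, hs] at hGw
  have heqk : k1*k2*k3*k4 = (k1+k2+k3+k4)*(k1+k2+k3+k4) := by
    have hsum : k1+k2+k3+k4 = 2*s := by omega
    rw [hsum]
    have h64 : 16*(k1*k2*k3*k4) = 16*((2*s)*(2*s)) := by linear_combination hGw
    linarith
  -- positivity of k1
  have hk1pos : 1 ≤ k1 := by
    by_contra hcon; push_neg at hcon
    have hk2p : 1 ≤ k2 := by omega
    have hk3p : 1 ≤ k3 := by omega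
    have hk4p : 1 ≤ k4 := by omega
    have hprod : k1*(k2*k3*k4) ≤ 0 :=
      mul_nonpos_of_nonpos_of_nonneg (by omega) (by positivity)
    have hzero : (k1+k2+k3+k4)*(k1+k2+k3+k4) ≤ 0 := by nlinarith [heqk]
    have hS0 : k1+k2+k3+k4 = 0 := by nlinarith [sq_nonneg (k1+k2+k3+k4)]
    have hP0 : k1*k2*k3*k4 = 0 := by rw [heqk, hS0]; ring
    have : k1 = 0 := by
      rcases mul_eq_zero.mp hP0 with h | h
      · rcases mul_eq_zero.mp h with h' | h'
        · rcases mul_eq_zero.mp h' with h'' | h''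
          · exact h''
          · omega
        · omega
      · omega
    omega
  have hd1 : k1 ≤ k2 := by omega
  have hd2 : k2 ≤ k3 := by omega
  have hd3 : k3 ≤ k4 := by omega
  have hd4 : k4 ≤ k1 + k2 + k3 - 2 := by omega
  rcases dio k1 k2 k3 k4 hk1pos hd1 hd2 hd3 hd4 heqk with h | h | h | h
  · left
    rw [hM]
    have : w = 5 ∧ x = 5 ∧ y = 6 ∧ z = 14 := by omega
    obtain ⟨rfl, rfl, rfl, rfl⟩ := this
    decide
  · right; left
    rw [hM]
    have : w = 2 ∧ x = 5 ∧ y = 5 ∧ z = 8 := by omega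
    obtain ⟨rfl, rfl, rfl, rfl⟩ := this
    decide
  · right; right; left
    rw [hM]
    have : w = 3 ∧ x = 3 ∧ y = 6 ∧ z = 6 := by omega
    obtain ⟨rfl, rfl, rfl, rfl⟩ := this
    decide
  · right; right; right
    rw [hM]
    have : w = 4 ∧ x = 4 ∧ y = 4 ∧ z = 4 := by omega
    obtain ⟨rfl, rfl, rfl, rfl⟩ := this
    decide

private lemma dist2_sq {p q : ℝ × ℝ} {t : ℝ} (h : dist2 p q = t) :
    (p.1 - q.1)^2 + (p.2 - q.2)^2 = t^2 := by
  rw [← h, dist2, Real.sq_sqrt (by positivity)]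

private lemma sq_cancel {u v : ℝ} (hu : 0 ≤ u) (hv : 0 ≤ v) (h : u^2 = v^2) : u = v := by
  rw [← Real.sqrt_sq hu, h, Real.sqrt_sq hv]

private lemma dpos' {X Y : ℝ × ℝ} (h : X.1 = Y.1 → X.2 = Y.2 → False) :
    0 < (X.1 - Y.1)^2 + (X.2 - Y.2)^2 := by
  by_contra hle; push_neg at hle
  exact h (by nlinarith [sq_nonneg (X.1-Y.1), sq_nonneg (X.2-Y.2)])
    (by nlinarith [sq_nonneg (X.1-Y.1), sq_nonneg (X.2-Y.2)])

set_option maxHeartbeats 1000000 in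

set_option maxHeartbeats 1000000 in
/-- the multiset of side lengths of an equable cyclic
quadrilateral with integer sides is one of exactly four possibilities. -/
theorem equable_cyclic_side_lengths (O A B C : ℝ × ℝ)
    (hquad : IsQuad O A B C)
    (hcyclic : ∃ (P : ℝ × ℝ) (r : ℝ),
      dist2 P O = r ∧ dist2 P A = r ∧ dist2 P B = r ∧ dist2 P C = r)
    (hsides : ∃ a b c d : ℤ,
      dist2 O A = (a : ℝ) ∧ dist2 A B = (b : ℝ) ∧ dist2 B C = (c : ℝ) ∧ dist2 C O = (d : ℝ))
    (hequable : quadArea O A B C = quadPerim O A B C) :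
    ({dist2 O A, dist2 A B, dist2 B C, dist2 C O} : Multiset ℝ) =
        ({14, 6, 5, 5} : Multiset ℝ) ∨
    ({dist2 O A, dist2 A B, dist2 B C, dist2 C O} : Multiset ℝ) =
        ({8, 5, 5, 2} : Multiset ℝ) ∨
    ({dist2 O A, dist2 A B, dist2 B C, dist2 C O} : Multiset ℝ) =
        ({6, 6, 3, 3} : Multiset ℝ) ∨
    ({dist2 O A, dist2 A B, dist2 B C, dist2 C O} : Multiset ℝ) =
        ({4, 4, 4, 4} : Multiset ℝ) := by

  obtain ⟨⟨hnc1, hnc2, hnc3, hnc4, hseg1, hseg2, -, -, -, -⟩, hccw⟩ := hquad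
  obtain ⟨P, r, hPO, hPA, hPB, hPC⟩ := hcyclic
  obtain ⟨aZ, bZ, cZ, dZ, hda, hdb, hdc, hdd⟩ := hsides
  have hO2 := dist2_sq hPO
  have hA2 := dist2_sq hPA
  have hB2 := dist2_sq hPB
  have hC2 := dist2_sq hPC
  have ha2 := dist2_sq hda
  have hb2 := dist2_sq hdb
  have hc2 := dist2_sq hdc
  have hd2 := dist2_sq hdd
  -- nonzero crosses
  have hT1ne : cross O A B ≠ 0 := hnc1
  have hyne : cross A B C ≠ 0 := hnc2
  have hT2ne : cross O B C ≠ 0 := fun h => hnc3 (by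
    show cross B C O = 0
    simp only [cross] at h ⊢; linarith)
  have hxne : cross O A C ≠ 0 := fun h => hnc4 (by
    show cross C O A = 0
    simp only [cross] at h ⊢; linarith)
  -- shoelace
  have hsho : shoelace O A B C = cross O A B + cross O B C := by
    simp only [shoelace, cross]; ring
  have hS : 0 < cross O A B + cross O B C := by rw [← hsho]; exact hccw
  have hxy : cross O A C + cross A B C = cross O A B + cross O B C := by
    simp only [cross]; ring
  -- cross reorderings
  have hABO : cross A B O = cross O A B := by simp only [cross]; ring
  have hBCO : cross B C O = cross O B C := by simp only [cross]; ring
  have hBCA : cross B C A = cross A B C := by simp only [cross]; ring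
  have hCOA : cross C O A = cross O A C := by simp only [cross]; ring
  have hCOB : cross C O B = cross O B C := by simp only [cross]; ring
  -- distinct points
  have hdOA : 0 < (O.1-A.1)^2 + (O.2-A.2)^2 := dpos' (fun h1 h2 => hnc1 (by
    show cross O A B = 0; simp only [cross]; rw [h1, h2]; ring))
  have hdAB : 0 < (A.1-B.1)^2 + (A.2-B.2)^2 := dpos' (fun h1 h2 => hnc1 (by
    show cross O A B = 0; simp only [cross]; rw [h1, h2]; ring))
  have hdBC : 0 < (B.1-C.1)^2 + (B.2-C.2)^2 := dpos' (fun h1 h2 => hnc2 (by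
    show cross A B C = 0; simp only [cross]; rw [h1, h2]; ring))
  have hdCO : 0 < (C.1-O.1)^2 + (C.2-O.2)^2 := dpos' (fun h1 h2 => hnc4 (by
    show cross C O A = 0; simp only [cross]; rw [h1, h2]; ring))
  have hdOB : 0 < (O.1-B.1)^2 + (O.2-B.2)^2 := dpos' (fun h1 h2 => hnc1 (by
    show cross O A B = 0; simp only [cross]; rw [h1, h2]; ring))
  have hdOC : 0 < (O.1-C.1)^2 + (O.2-C.2)^2 := dpos' (fun h1 h2 => hnc4 (by
    show cross C O A = 0; simp only [cross]; rw [← h1, ← h2]; ring))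
  -- convexity: both triangle parts positive
  have hT1pos : 0 < cross O A B := by
    rcases hT1ne.lt_or_gt with hT1neg | hp
    · exfalso
      have hT2pos : 0 < cross O B C := by linarith
      rcases hxne.lt_or_gt with hx | hx <;> rcases hyne.lt_or_gt with hy | hy
      · linarith
      · -- x<0, y>0 : AB meets CO
        obtain ⟨pt, hpt⟩ := straddle (p := A) (q := B) (u := C) (v := O)
          (by rw [hABO]; exact mul_neg_of_pos_of_neg hy hT1neg)
          (by rw [hCOA, hCOB]; exact mul_neg_of_neg_of_pos hx hT2pos)
        rw [hseg2] at hpt; exact hpt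
      · -- x>0, y<0 : OA meets BC
        obtain ⟨pt, hpt⟩ := straddle (p := O) (q := A) (u := B) (v := C)
          (by exact mul_neg_of_neg_of_pos hT1neg hx)
          (by rw [hBCO, hBCA]; exact mul_neg_of_pos_of_neg hT2pos hy)
        rw [hseg1] at hpt; exact hpt
      · -- x>0, y>0 : A inside triangle OBC
        have hkey := circle_bary (P := P) (W := A) (X := O) (Y := B) (Z := C)
          (k1 := cross A B C) (k2 := cross O A C) (k3 := -(cross O A B))
          hA2 hO2 hB2 hC2 (by simp only [cross]; ring) (by simp only [cross]; ring)
        linarith [hkey, mul_pos (mul_pos hy hx) hdOB,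
          mul_pos (mul_pos hy (neg_pos.mpr hT1neg)) hdOC,
          mul_pos (mul_pos hx (neg_pos.mpr hT1neg)) hdBC]
    · exact hp
  have hT2pos : 0 < cross O B C := by
    rcases hT2ne.lt_or_gt with hT2neg | hp
    · exfalso
      have hT1p : 0 < cross O A B := by linarith
      rcases hxne.lt_or_gt with hx | hx <;> rcases hyne.lt_or_gt with hy | hy
      · linarith
      · -- x<0, y>0 : OA meets BC
        obtain ⟨pt, hpt⟩ := straddle (p := O) (q := A) (u := B) (v := C)
          (by exact mul_neg_of_pos_of_neg hT1p hx)
          (by rw [hBCO, hBCA]; exact mul_neg_of_neg_of_pos hT2neg hy)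
        rw [hseg1] at hpt; exact hpt
      · -- x>0, y<0 : AB meets CO
        obtain ⟨pt, hpt⟩ := straddle (p := A) (q := B) (u := C) (v := O)
          (by rw [hABO]; exact mul_neg_of_neg_of_pos hy hT1p)
          (by rw [hCOA, hCOB]; exact mul_neg_of_pos_of_neg hx hT2neg)
        rw [hseg2] at hpt; exact hpt
      · -- x>0, y>0 : C inside triangle OAB
        have hkey := circle_bary (P := P) (W := C) (X := O) (Y := A) (Z := B)
          (k1 := cross A B C) (k2 := -(cross O B C)) (k3 := cross O A C)
          hC2 hO2 hA2 hB2 (by simp only [cross]; ring) (by simp only [cross]; ring)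
        linarith [hkey, mul_pos (mul_pos hy (neg_pos.mpr hT2neg)) hdOA,
          mul_pos (mul_pos hy hx) hdOB,
          mul_pos (mul_pos (neg_pos.mpr hT2neg) hx) hdAB]
    · exact hp
  -- key cyclic relation
  have key1 := cyclic_key hO2 hA2 hB2 hC2
  -- Lagrange identities
  have hL1 : (aZ:ℝ)^2 * (bZ:ℝ)^2 = (cross O A B)^2
      + ((O.1-A.1)*(B.1-A.1) + (O.2-A.2)*(B.2-A.2))^2 := by
    rw [← ha2, ← hb2]; simp only [cross]; ring
  have hL2 : (cZ:ℝ)^2 * (dZ:ℝ)^2 = (cross O B C)^2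
      + ((O.1-C.1)*(B.1-C.1) + (O.2-C.2)*(B.2-C.2))^2 := by
    rw [← hc2, ← hd2]; simp only [cross]; ring
  have hDsub : 2*(((O.1-A.1)*(B.1-A.1) + (O.2-A.2)*(B.2-A.2))
      - ((O.1-C.1)*(B.1-C.1) + (O.2-C.2)*(B.2-C.2)))
      = (aZ:ℝ)^2 + (bZ:ℝ)^2 - (cZ:ℝ)^2 - (dZ:ℝ)^2 := by
    rw [← ha2, ← hb2, ← hc2, ← hd2]; ring
  obtain ⟨al, hal⟩ : ∃ al : ℝ,
      al = -((O.1-A.1)*(B.1-A.1) + (O.2-A.2)*(B.2-A.2)) / cross O A B := ⟨_, rfl⟩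
  have hD1 : (O.1-A.1)*(B.1-A.1) + (O.2-A.2)*(B.2-A.2) = -al * cross O A B := by
    rw [hal]; field_simp
  have hD2 : (O.1-C.1)*(B.1-C.1) + (O.2-C.2)*(B.2-C.2) = al * cross O B C := by
    rw [hal, div_mul_eq_mul_div, eq_div_iff hT1ne]
    linear_combination key1
  have hqr : (0:ℝ) ≤ 1 + al^2 := by positivity
  have hs2 : Real.sqrt (1+al^2)^2 = 1+al^2 := Real.sq_sqrt hqr
  have haR : (0:ℝ) ≤ (aZ:ℝ) := by rw [← hda]; exact Real.sqrt_nonneg _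
  have hbR : (0:ℝ) ≤ (bZ:ℝ) := by rw [← hdb]; exact Real.sqrt_nonneg _
  have hcR : (0:ℝ) ≤ (cZ:ℝ) := by rw [← hdc]; exact Real.sqrt_nonneg _
  have hdR : (0:ℝ) ≤ (dZ:ℝ) := by rw [← hdd]; exact Real.sqrt_nonneg _
  have hab : (aZ:ℝ) * (bZ:ℝ) = cross O A B * Real.sqrt (1+al^2) := by
    refine sq_cancel (mul_nonneg haR hbR)
      (mul_nonneg hT1pos.le (Real.sqrt_nonneg _)) ?_
    rw [mul_pow, mul_pow, hs2]
    linear_combination hL1 + (((O.1-A.1)*(B.1-A.1) + (O.2-A.2)*(B.2-A.2))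
      - al * cross O A B) * hD1
  have hcd : (cZ:ℝ) * (dZ:ℝ) = cross O B C * Real.sqrt (1+al^2) := by
    refine sq_cancel (mul_nonneg hcR hdR)
      (mul_nonneg hT2pos.le (Real.sqrt_nonneg _)) ?_
    rw [mul_pow, mul_pow, hs2]
    linear_combination hL2 + (((O.1-C.1)*(B.1-C.1) + (O.2-C.2)*(B.2-C.2))
      + al * cross O B C) * hD2
  -- area and perimeter
  have hK : quadArea O A B C = (cross O A B + cross O B C)/2 := by
    unfold quadArea
    rw [hsho, abs_of_pos hS]
  have hperim : quadPerim O A B C = (aZ:ℝ) + (bZ:ℝ) + (cZ:ℝ) + (dZ:ℝ) := by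
    unfold quadPerim
    rw [hda, hdb, hdc, hdd]
  rw [hK, hperim] at hequable
  -- Brahmagupta combined with equability
  have hGr : (-(aZ:ℝ)+bZ+cZ+dZ)*((aZ:ℝ)-bZ+cZ+dZ)*((aZ:ℝ)+bZ-cZ+dZ)*((aZ:ℝ)+bZ+cZ-dZ)
      = 16*((aZ:ℝ)+bZ+cZ+dZ)^2 := by
    have hhh : 4*((aZ:ℝ)*(bZ:ℝ) + (cZ:ℝ)*(dZ:ℝ))^2
        - ((aZ:ℝ)^2 + (bZ:ℝ)^2 - (cZ:ℝ)^2 - (dZ:ℝ)^2)^2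
        = 16*((aZ:ℝ)+bZ+cZ+dZ)^2 := by
      rw [hab, hcd, ← hDsub, hD1, hD2, ← hequable]
      linear_combination (4*(cross O A B + cross O B C)^2) * hs2
    linear_combination hhh
  have hGZ : (-aZ+bZ+cZ+dZ)*(aZ-bZ+cZ+dZ)*(aZ+bZ-cZ+dZ)*(aZ+bZ+cZ-dZ)
      = 16*(aZ+bZ+cZ+dZ)^2 := by exact_mod_cast hGr
  have haZ1 : 1 ≤ aZ := by
    have : (0:ℝ) < (aZ:ℝ) := by rw [← hda]; unfold dist2; exact Real.sqrt_pos.mpr hdOA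
    have h0 : (0:ℤ) < aZ := by exact_mod_cast this
    omega
  have hbZ1 : 1 ≤ bZ := by
    have : (0:ℝ) < (bZ:ℝ) := by rw [← hdb]; unfold dist2; exact Real.sqrt_pos.mpr hdAB
    have h0 : (0:ℤ) < bZ := by exact_mod_cast this
    omega
  have hcZ1 : 1 ≤ cZ := by
    have : (0:ℝ) < (cZ:ℝ) := by rw [← hdc]; unfold dist2; exact Real.sqrt_pos.mpr hdBC
    have h0 : (0:ℤ) < cZ := by exact_mod_cast this
    omega
  have hdZ1 : 1 ≤ dZ := by
    have : (0:ℝ) < (dZ:ℝ) := by rw [← hdd]; unfold dist2; exact Real.sqrt_pos.mpr hdCO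
    have h0 : (0:ℤ) < dZ := by exact_mod_cast this
    omega
  rw [hda, hdb, hdc, hdd]
  rcases intMain aZ bZ cZ dZ haZ1 hbZ1 hcZ1 hdZ1 hGZ with h | h | h | h
  · left
    have := congrArg (Multiset.map (fun n : ℤ => (n:ℝ))) h
    simpa using this
  · right; left
    have := congrArg (Multiset.map (fun n : ℤ => (n:ℝ))) h
    simpa using this
  · right; right; left
    have := congrArg (Multiset.map (fun n : ℤ => (n:ℝ))) h
    simpa using this
  · right; right; right
    have := congrArg (Multiset.map (fun n : ℤ => (n:ℝ))) h
    simpa using this
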